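/- Let G ∈ ℚ⟦x,y⟧ be a formal power series in two variables satisfying G = 1 + x·y·G + x·G². Then for all n ≥ 0 and 0 ≤ k ≤ n, (n - k + 1) · [x^n y^k] G = binom(2n-k, k) · binom(2n-2k, n-k), and [x^n y^k] G = 0 for k > n. That is, the matrix with generating function (1 - xy - √(1 - 4x - 2xy + x²y²))/(2x) has general term binom(2n-k,k)·binom(2n-2k,n-k)/(n-k+1). -/

import Mathlib

open Finset MvPowerSeries

namespace A060693

noncomputable abbrev e (n k : ℕ) : Fin 2 →₀ ℕ := Finsupp.single 0 n + Finsupp.single 1 k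
lemma e_decomp (f : Fin 2 →₀ ℕ) : f = e (f 0) (f 1) := by ext i; fin_cases i <;> simp [e]
lemma e_le {a b c d : ℕ} : e a b ≤ e c d ↔ a ≤ c ∧ b ≤ d := by
  rw [Finsupp.le_def]
  constructor
  · intro h; exact ⟨by simpa [e] using h 0, by simpa [e] using h 1⟩
  · rintro ⟨h1, h2⟩ i; fin_cases i <;> simpa [e]
lemma e_sub (a b c d : ℕ) : e a b - e c d = e (a-c) (b-d) := by
  ext i; fin_cases i <;> simp [e, Finsupp.tsub_apply]
lemma e_eq_zero {n k : ℕ} : e n k = 0 ↔ n = 0 ∧ k = 0 := by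
  constructor
  · intro h
    constructor
    · have := DFunLike.congr_fun h (0 : Fin 2); simpa [e] using this
    · have := DFunLike.congr_fun h (1 : Fin 2); simpa [e] using this
  · rintro ⟨rfl, rfl⟩; simp [e]


lemma hockey (r k : ℕ) : ∑ c ∈ range (k+1), (r + c).choose c = (r + k + 1).choose k := by
  induction k with
  | zero => simp
  | succ k ih =>
      rw [sum_range_succ, ih]
      have h1 : r + (k+1) = r + k + 1 := by omega
      rw [h1, Nat.choose_succ_succ (r+k+1) k]

lemma vdm (r : ℕ) : ∀ s k : ℕ,
    ∑ c ∈ range (k+1), (r + c).choose c * (s + (k - c)).choose (k - c)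
      = (r + s + k + 1).choose k := by
  intro s
  induction s with
  | zero =>
      intro k
      have : ∀ c ∈ range (k+1), (r + c).choose c * (0 + (k - c)).choose (k - c)
          = (r + c).choose c := by
        intro c _; simp
      rw [sum_congr rfl this, hockey]
      norm_num
  | succ s ihs =>
      intro k
      induction k with
      | zero => simp
      | succ k ihk =>
          have key : ∀ c ∈ range (k+1),
              (r + c).choose c * (s + 1 + (k + 1 - c)).choose (k + 1 - c)
                = (r + c).choose c * (s + (k + 1 - c)).choose (k + 1 - c)
                  + (r + c).choose c * (s + 1 + (k - c)).choose (k - c) := by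
            intro c hc
            have hc' : c ≤ k := by simpa [Nat.lt_succ_iff] using hc
            have h1 : k + 1 - c = (k - c) + 1 := by omega
            have h2 : s + 1 + ((k - c) + 1) = (s + (k - c) + 1) + 1 := by omega
            have h3 : s + ((k - c) + 1) = s + (k - c) + 1 := by omega
            have h4 : s + 1 + (k - c) = s + (k - c) + 1 := by omega
            rw [h1, h2, h3, h4, Nat.choose_succ_succ, Nat.mul_add, Nat.add_comm]
          rw [sum_range_succ, sum_congr rfl key, sum_add_distrib, ihk]
          have last : (r + (k+1)).choose (k+1) * (s + 1 + (k + 1 - (k+1))).choose (k + 1 - (k+1))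
              = (r + (k+1)).choose (k+1) * (s + (k + 1 - (k+1))).choose (k + 1 - (k+1)) := by
            simp
          rw [last]
          have hsum : (∑ c ∈ range (k+1), (r + c).choose c * (s + (k + 1 - c)).choose (k + 1 - c))
              + (r + (k+1)).choose (k+1) * (s + (k + 1 - (k+1))).choose (k + 1 - (k+1))
              = (r + s + (k+1) + 1).choose (k+1) := by
            rw [← sum_range_succ]
            exact ihs (k+1)
          have hp : (r+(s+1)+(k+1)+1).choose (k+1)
              = (r+(s+1)+k+1).choose k + (r+s+(k+1)+1).choose (k+1) := by
            have e1 : r+(s+1)+(k+1)+1 = (r+s+k+2)+1 := by ring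
            have e2 : r+(s+1)+k+1 = r+s+k+2 := by ring
            have e3 : r+s+(k+1)+1 = r+s+k+2 := by ring
            rw [e1, e2, e3, Nat.choose_succ_succ]
          rw [hp, ← hsum]
          ring

lemma vdm' (r s k : ℕ) :
    ∑ cd ∈ antidiagonal k, (r + cd.1).choose cd.1 * (s + cd.2).choose cd.2
      = (r + s + k + 1).choose k := by
  rw [Finset.Nat.sum_antidiagonal_eq_sum_range_succ
    (fun c d => (r + c).choose c * (s + d).choose d)]
  exact vdm r s k

def gN (n k : ℕ) : ℕ := if k ≤ n then catalan (n-k) * (2*n-k).choose k else 0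

lemma S_zero (n k : ℕ) (hk : n < k) :
    ∑ ab ∈ antidiagonal n, ∑ cd ∈ antidiagonal k, gN ab.1 cd.1 * gN ab.2 cd.2 = 0 := by
  refine sum_eq_zero fun ab hab => sum_eq_zero fun cd hcd => ?_
  have h1 := Finset.HasAntidiagonal.mem_antidiagonal.mp hab
  have h2 := Finset.HasAntidiagonal.mem_antidiagonal.mp hcd
  by_cases h3 : cd.1 ≤ ab.1
  · have h4 : ¬ cd.2 ≤ ab.2 := by omega
    simp [gN, h4]
  · simp [gN, h3]

lemma S_eq (n k : ℕ) (hk : k ≤ n) :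
    ∑ ab ∈ antidiagonal n, ∑ cd ∈ antidiagonal k, gN ab.1 cd.1 * gN ab.2 cd.2
      = catalan (n-k+1) * (2*n-k+1).choose k := by
  rw [← Finset.sum_product']
  have step1 : ∀ x ∈ antidiagonal n ×ˢ antidiagonal k,
      gN x.1.1 x.2.1 * gN x.1.2 x.2.2
        = if x.2.1 ≤ x.1.1 ∧ x.2.2 ≤ x.1.2 then
            (catalan (x.1.1 - x.2.1) * (2*x.1.1 - x.2.1).choose x.2.1)
              * (catalan (x.1.2 - x.2.2) * (2*x.1.2 - x.2.2).choose x.2.2)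
          else 0 := by
    intro x _
    by_cases h1 : x.2.1 ≤ x.1.1
    · by_cases h2 : x.2.2 ≤ x.1.2
      · simp [gN, h1, h2]
      · simp [gN, h2]
    · simp [gN, h1]
  rw [sum_congr rfl step1, ← Finset.sum_filter]
  have step2 : ∑ x ∈ (antidiagonal n ×ˢ antidiagonal k).filter
        (fun x => x.2.1 ≤ x.1.1 ∧ x.2.2 ≤ x.1.2),
      (catalan (x.1.1 - x.2.1) * (2*x.1.1 - x.2.1).choose x.2.1)
        * (catalan (x.1.2 - x.2.2) * (2*x.1.2 - x.2.2).choose x.2.2)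
      = ∑ y ∈ antidiagonal (n-k) ×ˢ antidiagonal k,
          (catalan y.1.1 * catalan y.1.2)
            * ((2*y.1.1 + y.2.1).choose y.2.1 * (2*y.1.2 + y.2.2).choose y.2.2) := by
    refine Finset.sum_nbij' (fun x => ((x.1.1 - x.2.1, x.1.2 - x.2.2), x.2))
      (fun y => ((y.1.1 + y.2.1, y.1.2 + y.2.2), y.2)) ?_ ?_ ?_ ?_ ?_
    · intro x hx
      simp only [mem_filter, mem_product, Finset.HasAntidiagonal.mem_antidiagonal] at hx ⊢
      omega
    · intro y hy
      simp only [mem_filter, mem_product, Finset.HasAntidiagonal.mem_antidiagonal] at hy ⊢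
      omega
    · intro x hx
      simp only [mem_filter, mem_product, Finset.HasAntidiagonal.mem_antidiagonal] at hx
      have h1 : x.1.1 - x.2.1 + x.2.1 = x.1.1 := by omega
      have h2 : x.1.2 - x.2.2 + x.2.2 = x.1.2 := by omega
      simp [h1, h2]
    · intro y hy
      simp
    · intro x hx
      simp only [mem_filter, mem_product, Finset.HasAntidiagonal.mem_antidiagonal] at hx
      have h1 : 2*x.1.1 - x.2.1 = 2*(x.1.1 - x.2.1) + x.2.1 := by omega
      have h2 : 2*x.1.2 - x.2.2 = 2*(x.1.2 - x.2.2) + x.2.2 := by omega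
      rw [h1, h2]
      ring
  rw [step2, Finset.sum_product]
  have step3 : ∀ pq ∈ antidiagonal (n-k),
      (∑ cd ∈ antidiagonal k, (catalan pq.1 * catalan pq.2)
        * ((2*pq.1 + cd.1).choose cd.1 * (2*pq.2 + cd.2).choose cd.2))
        = (catalan pq.1 * catalan pq.2) * (2*n-k+1).choose k := by
    intro pq hpq
    have h := Finset.HasAntidiagonal.mem_antidiagonal.mp hpq
    rw [← mul_sum, vdm']
    congr 2
    omega
  calc ∑ pq ∈ antidiagonal (n-k), ∑ cd ∈ antidiagonal k,
        (catalan pq.1 * catalan pq.2)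
          * ((2*pq.1 + cd.1).choose cd.1 * (2*pq.2 + cd.2).choose cd.2)
      = ∑ pq ∈ antidiagonal (n-k), (catalan pq.1 * catalan pq.2) * (2*n-k+1).choose k :=
        sum_congr rfl step3
    _ = (∑ pq ∈ antidiagonal (n-k), catalan pq.1 * catalan pq.2) * (2*n-k+1).choose k := by
        rw [sum_mul]
    _ = catalan (n-k+1) * (2*n-k+1).choose k := by rw [← catalan_succ']

lemma gN_rec (n k : ℕ) :
    gN (n+1) k = (if 1 ≤ k then gN n (k-1) else 0)
      + ∑ ab ∈ antidiagonal n, ∑ cd ∈ antidiagonal k, gN ab.1 cd.1 * gN ab.2 cd.2 := by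
  rcases Nat.lt_or_ge n k with h | h
  · -- k ≥ n+1
    rcases Nat.lt_or_ge (n+1) k with h2 | h2
    · -- k > n+1 : everything 0
      rw [S_zero n k (by omega)]
      have : ¬ k - 1 ≤ n := by omega
      simp [gN, this, Nat.not_le.mpr h2, le_of_lt]
    · -- k = n+1
      have hk : k = n + 1 := by omega
      subst hk
      rw [S_zero n (n+1) (by omega)]
      simp only [gN, if_pos (le_refl (n+1)), if_pos (le_refl n), if_pos (Nat.le_refl 1),
        show n+1-1 = n by omega]
      rw [show 2*(n+1)-(n+1) = n+1 by omega, show 2*n-n = n by omega,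
        Nat.choose_self, Nat.choose_self]
      simp
  · -- k ≤ n
    rw [S_eq n k h]
    rcases Nat.eq_zero_or_pos k with rfl | hk
    · simp [gN]
    · have h1 : (1:ℕ) ≤ k := hk
      have h2 : k - 1 ≤ n := by omega
      rw [if_pos h1]
      simp only [gN, if_pos (show k ≤ n + 1 by omega), if_pos h2]
      have e1 : n + 1 - k = n - k + 1 := by omega
      have e2 : n - (k-1) = n - k + 1 := by omega
      rw [e1, e2]
      have e3 : 2*(n+1) - k = (2*n-k+1) + 1 := by omega
      have e4 : 2*n - (k-1) = 2*n-k+1 := by omega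
      rw [e3, e4]
      obtain ⟨k', rfl⟩ : ∃ k', k = k'+1 := ⟨k-1, by omega⟩
      simp only [Nat.add_sub_cancel]
      rw [Nat.choose_succ_succ (2*n-(k'+1)+1) k']
      ring

lemma sum_antidiagonal_e (n k : ℕ) (f : (Fin 2 →₀ ℕ) → (Fin 2 →₀ ℕ) → ℚ) :
    ∑ p ∈ antidiagonal (e n k), f p.1 p.2
      = ∑ ab ∈ antidiagonal n, ∑ cd ∈ antidiagonal k, f (e ab.1 cd.1) (e ab.2 cd.2) := by
  rw [← Finset.sum_product']
  refine Finset.sum_nbij' (fun p => ((p.1 0, p.2 0), (p.1 1, p.2 1)))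
    (fun x => (e x.1.1 x.2.1, e x.1.2 x.2.2)) ?_ ?_ ?_ ?_ ?_
  · intro p hp
    have h := Finset.HasAntidiagonal.mem_antidiagonal.mp hp
    simp only [mem_product, Finset.HasAntidiagonal.mem_antidiagonal]
    constructor
    · have := DFunLike.congr_fun h (0 : Fin 2); simpa [e] using this
    · have := DFunLike.congr_fun h (1 : Fin 2); simpa [e] using this
  · intro x hx
    simp only [mem_product, Finset.HasAntidiagonal.mem_antidiagonal] at hx
    rw [Finset.HasAntidiagonal.mem_antidiagonal]
    ext i; fin_cases i <;> simp [e, hx.1, hx.2]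
  · intro p _
    rw [Prod.ext_iff]
    exact ⟨(e_decomp p.1).symm, (e_decomp p.2).symm⟩
  · intro x _
    simp [e]
  · intro p _
    rw [← e_decomp p.1, ← e_decomp p.2]

lemma coeff_e_monomial_mul (m l n k : ℕ) (φ : MvPowerSeries (Fin 2) ℚ) :
    coeff (e n k) (monomial (e m l) 1 * φ)
      = if m ≤ n ∧ l ≤ k then coeff (e (n-m) (k-l)) φ else 0 := by
  rw [coeff_monomial_mul]
  by_cases h : m ≤ n ∧ l ≤ k
  · rw [if_pos (e_le.mpr h), if_pos h, e_sub, one_mul]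
  · rw [if_neg (fun hc => h (e_le.mp hc)), if_neg h]

lemma X0X1 : (X 0 * X 1 : MvPowerSeries (Fin 2) ℚ) = monomial (e 1 1) 1 := by
  rw [X_def, X_def, monomial_mul_monomial, one_mul]

lemma X0 : (X 0 : MvPowerSeries (Fin 2) ℚ) = monomial (e 1 0) 1 := by
  rw [X_def]; simp [e]

lemma coeff_G (G : MvPowerSeries (Fin 2) ℚ)
    (hG : G = 1 + X (0 : Fin 2) * X (1 : Fin 2) * G + X (0 : Fin 2) * G ^ 2) :
    ∀ n k : ℕ, coeff (e n k) G = gN n k := by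
  intro n
  induction n using Nat.strong_induction_on with
  | _ n ih =>
    intro k
    conv_lhs => rw [hG]
    rw [map_add, map_add, coeff_one, X0X1, coeff_e_monomial_mul,
      sq, X0, coeff_e_monomial_mul]
    rcases n with _ | n
    · rw [if_neg (show ¬((1:ℕ) ≤ 0 ∧ 1 ≤ k) by omega),
        if_neg (show ¬((1:ℕ) ≤ 0 ∧ 0 ≤ k) by omega)]
      by_cases hk : k = 0
      · subst hk; rw [if_pos (e_eq_zero.mpr ⟨rfl, rfl⟩)]; simp [gN]
      · rw [if_neg (fun hc => hk (e_eq_zero.mp hc).2)]; simp [gN, hk]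
    · rw [if_neg (fun hc : e (n+1) k = 0 => by have := (e_eq_zero.mp hc).1; omega),
        if_pos (show (1:ℕ) ≤ n + 1 ∧ 0 ≤ k from ⟨by omega, Nat.zero_le k⟩)]
      rw [show n + 1 - 1 = n from rfl, Nat.sub_zero, coeff_mul, sum_antidiagonal_e n k (fun a b => coeff a G * coeff b G)]
      have hsum : ∀ ab ∈ antidiagonal n, ∀ cd ∈ antidiagonal k,
          coeff (e ab.1 cd.1) G * coeff (e ab.2 cd.2) G
            = (gN ab.1 cd.1 * gN ab.2 cd.2 : ℕ) := by
        intro ab hab cd _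
        have h := Finset.HasAntidiagonal.mem_antidiagonal.mp hab
        rw [ih ab.1 (by omega), ih ab.2 (by omega)]
        push_cast; ring
      rw [sum_congr rfl (fun ab hab => sum_congr rfl (fun cd hcd => hsum ab hab cd hcd))]
      by_cases hk : 1 ≤ k
      · rw [if_pos (show (1:ℕ) ≤ n + 1 ∧ 1 ≤ k from ⟨by omega, hk⟩), ih n (by omega),
          gN_rec, if_pos hk]
        push_cast
        ring
      · rw [if_neg (show ¬((1:ℕ) ≤ n + 1 ∧ 1 ≤ k) by omega), gN_rec, if_neg hk]
        push_cast
        ring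


end A060693

open A060693

/-- Let `G ∈ ℚ⟦x,y⟧` satisfy `G = 1 + xyG + xG²` (OEIS A060693). Then for
`0 ≤ k ≤ n`, `(n-k+1)·[x^n y^k]G = C(2n-k,k)·C(2n-2k,n-k)`, and `[x^n y^k]G = 0` for `k > n`. -/
theorem stmt_13 (G : MvPowerSeries (Fin 2) ℚ)
    (hG : G = 1 + MvPowerSeries.X (0 : Fin 2) * MvPowerSeries.X (1 : Fin 2) * G
      + MvPowerSeries.X (0 : Fin 2) * G ^ 2) :
    (∀ n k : ℕ, k ≤ n →
      ((n - k + 1 : ℕ) : ℚ) * MvPowerSeries.coeff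
          (Finsupp.single (0 : Fin 2) n + Finsupp.single (1 : Fin 2) k) G
        = ((2 * n - k).choose k : ℚ) * ((2 * n - 2 * k).choose (n - k) : ℚ)) ∧
    (∀ n k : ℕ, n < k →
      MvPowerSeries.coeff
        (Finsupp.single (0 : Fin 2) n + Finsupp.single (1 : Fin 2) k) G = 0) := by
  have key := coeff_G G hG
  constructor
  · intro n k hkn
    rw [show Finsupp.single (0 : Fin 2) n + Finsupp.single (1 : Fin 2) k = e n k from rfl,
      key n k]
    have h1 : (n-k+1) * gN n k = (2*n-k).choose k * (2*n-2*k).choose (n-k) := by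
      rw [gN, if_pos hkn, ← mul_assoc, succ_mul_catalan_eq_centralBinom,
        Nat.centralBinom_eq_two_mul_choose, show 2*(n-k) = 2*n-2*k by omega]
      ring
    exact_mod_cast congrArg (Nat.cast : ℕ → ℚ) h1
  · intro n k hnk
    rw [show Finsupp.single (0 : Fin 2) n + Finsupp.single (1 : Fin 2) k = e n k from rfl,
      key n k, gN, if_neg (by omega)]
    simp
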